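/- Let X be a separable metric space with completion X*. If X is strictly ℕ^ℕ-dominated (there is a family {A_K : K ∈ K(ℕ^ℕ)} of compact subsets of X covering X with A_{K∩L} = A_K ∩ A_L for all compact K, L ⊆ ℕ^ℕ), then X is a Borel subset of X*. -/

import Mathlib

open MeasureTheory Set Topology Filter

set_option linter.unusedSectionVars false

namespace StrictDomAux

variable {Z : Type*} [MetricSpace Z] (C : (ℕ → ℕ) → Set Z)

/-- Level `N` union of all pieces capped by `s` on coordinates `< N`. -/
def WW (N : ℕ) (s : ℕ → ℕ) : Set Z :=
  ⋃ (g : ℕ → ℕ) (_ : ∀ n < N, g n ≤ s n), C g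

/-- The canonical minimal index function of a point. -/
noncomputable def mm (z : Z) (n : ℕ) : ℕ := sInf {k | ∃ f, z ∈ C f ∧ f n = k}

/-- The closed "graph" set. -/
def GG : Set ((ℕ → ℕ) × Z) := {p | ∀ N, p.2 ∈ closure (WW C N p.1)}

/-- Capping a function at coordinate `i` by `k`. -/
def capf (i k : ℕ) (f : ℕ → ℕ) : ℕ → ℕ := fun n => if n = i then min (f n) k else f n

lemma capf_self (i k : ℕ) (f : ℕ → ℕ) : capf i k f i = min (f i) k := by
  simp [capf]

lemma capf_ne {i n : ℕ} (k : ℕ) (f : ℕ → ℕ) (h : n ≠ i) : capf i k f n = f n := by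
  simp [capf, h]

lemma capf_cont (i k : ℕ) : Continuous (capf i k) := by
  refine continuous_pi (fun n => ?_)
  exact (continuous_of_discreteTopology
    (f := fun v : ℕ => if n = i then min v k else v)).comp (continuous_apply n)

variable {C}

lemma mm_le {z : Z} {f : ℕ → ℕ} (hf : z ∈ C f) (n : ℕ) : mm C z n ≤ f n :=
  Nat.sInf_le ⟨f, hf, rfl⟩

lemma exists_witness {z : Z} {f₀ : ℕ → ℕ} (h : z ∈ C f₀) (n : ℕ) :
    ∃ g, z ∈ C g ∧ g n = mm C z n :=
  Nat.sInf_mem (⟨f₀ n, f₀, h, rfl⟩ : {k | ∃ f, z ∈ C f ∧ f n = k}.Nonempty)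

lemma exists_prefix_witness
    (hmeet : ∀ f g z, z ∈ C f → z ∈ C g → z ∈ C (fun n => min (f n) (g n)))
    {z : Z} {f₀ : ℕ → ℕ} (h : z ∈ C f₀) (N : ℕ) :
    ∃ g, z ∈ C g ∧ ∀ n < N, g n = mm C z n := by
  induction N with
  | zero => exact ⟨f₀, h, fun n hn => absurd hn (Nat.not_lt_zero n)⟩
  | succ N ih =>
    obtain ⟨g, hg, hgN⟩ := ih
    obtain ⟨g', hg', hg'N⟩ := exists_witness h N
    refine ⟨fun n => min (g n) (g' n), hmeet _ _ _ hg hg', fun n hn => ?_⟩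
    show min (g n) (g' n) = mm C z n
    rcases Nat.lt_succ_iff_lt_or_eq.1 hn with h1 | rfl
    · rw [hgN n h1]
      exact min_eq_left (mm_le hg' n)
    · rw [hg'N]
      exact min_eq_right (mm_le hg n)

lemma mem_WW_of
    (hmeet : ∀ f g z, z ∈ C f → z ∈ C g → z ∈ C (fun n => min (f n) (g n)))
    {z : Z} {f₀ : ℕ → ℕ} (h : z ∈ C f₀) {N : ℕ} {s : ℕ → ℕ}
    (hb : ∀ n < N, mm C z n ≤ s n) : z ∈ WW C N s := by
  obtain ⟨g, hg, hgN⟩ := exists_prefix_witness hmeet h N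
  exact mem_iUnion.2 ⟨g, mem_iUnion.2 ⟨fun n hn => (hgN n hn).le.trans (hb n hn), hg⟩⟩

lemma of_mem_WW {z : Z} {N : ℕ} {s : ℕ → ℕ} (h : z ∈ WW C N s) :
    ∃ g, z ∈ C g ∧ ∀ n < N, mm C z n ≤ s n := by
  obtain ⟨g, hgs, hg⟩ := by simpa only [WW, mem_iUnion] using h
  exact ⟨g, hg, fun n hn => (mm_le hg n).trans (hgs n hn)⟩

lemma WW_congr {N : ℕ} {s t : ℕ → ℕ} (h : ∀ n < N, s n = t n) : WW C N s = WW C N t := by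
  ext z
  simp only [WW, mem_iUnion]
  constructor <;> rintro ⟨g, hgs, hgC⟩
  · exact ⟨g, fun n hn => (h n hn) ▸ hgs n hn, hgC⟩
  · exact ⟨g, fun n hn => (h n hn) ▸ hgs n hn, hgC⟩

/-- The key diagonal lemma. -/
lemma diag (hcomp : ∀ f, IsCompact (C f))
    (hmono : ∀ f g, (∀ n, f n ≤ g n) → C f ⊆ C g)
    {z : Z} {f : ℕ → ℕ} (h : ∀ N, z ∈ closure (WW C N f)) :
    ∃ f₀, z ∈ C f₀ ∧ ∀ n, mm C z n ≤ f n := by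
  have key : ∀ N : ℕ, ∃ (x : Z) (g : ℕ → ℕ),
      x ∈ C g ∧ (∀ n < N, g n ≤ f n) ∧ dist z x < 1 / (N + 1) := by
    intro N
    have hpos : (0 : ℝ) < 1 / (N + 1) := by positivity
    obtain ⟨x, hx, hd⟩ := Metric.mem_closure_iff.1 (h N) _ hpos
    obtain ⟨g, hgs, hgC⟩ := by simpa only [WW, mem_iUnion] using hx
    exact ⟨x, g, hgC, hgs, hd⟩
  choose x g hxC hgf hdist using key
  have hx_tendsto : Tendsto x atTop (nhds z) := by
    rw [Metric.tendsto_atTop]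
    intro ε hε
    obtain ⟨n, hn⟩ := exists_nat_one_div_lt hε
    refine ⟨n, fun N hN => ?_⟩
    have h2 : (1 : ℝ) / (N + 1) ≤ 1 / (n + 1) := by
      apply one_div_le_one_div_of_le
      · positivity
      · exact_mod_cast by omega
    have h3 := hdist N
    rw [dist_comm]
    linarith
  have main : ∀ N₀ : ℕ, ∃ f₀, z ∈ C f₀ ∧ ∀ n < N₀, f₀ n = f n := by
    intro N₀
    set H : ℕ → ℕ := fun j => max (f j) ((Finset.Icc N₀ j).sup fun N => g N j) with hH
    have hmem : ∀ N, N₀ ≤ N → x N ∈ C H := by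
      intro N hN
      refine hmono (g N) H (fun j => ?_) (hxC N)
      by_cases hj : j < N
      · exact le_trans (hgf N j hj) (le_max_left _ _)
      · exact le_trans (Finset.le_sup (f := fun N => g N j) (Finset.mem_Icc.2 ⟨hN, Nat.le_of_not_lt hj⟩))
          (le_max_right _ _)
    have hz : z ∈ C H := by
      refine (hcomp H).isClosed.mem_of_tendsto hx_tendsto ?_
      filter_upwards [eventually_ge_atTop N₀] with N hN using hmem N hN
    refine ⟨H, hz, fun n hn => ?_⟩
    have hicc : Finset.Icc N₀ n = ∅ := Finset.Icc_eq_empty (by omega)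
    simp [hH, hicc]
  obtain ⟨f₀, hf₀, -⟩ := main 0
  refine ⟨f₀, hf₀, fun n => ?_⟩
  obtain ⟨f₁, hf₁, hpre⟩ := main (n + 1)
  calc mm C z n ≤ f₁ n := mm_le hf₁ n
    _ = f n := hpre n (Nat.lt_succ_self n)

lemma mem_GG (hcomp : ∀ f, IsCompact (C f))
    (hmono : ∀ f g, (∀ n, f n ≤ g n) → C f ⊆ C g)
    (hmeet : ∀ f g z, z ∈ C f → z ∈ C g → z ∈ C (fun n => min (f n) (g n)))
    {p : (ℕ → ℕ) × Z} :
    p ∈ GG C ↔ (∃ f₀, p.2 ∈ C f₀) ∧ ∀ n, mm C p.2 n ≤ p.1 n := by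
  constructor
  · intro h
    obtain ⟨f₀, h1, h2⟩ := diag hcomp hmono h
    exact ⟨⟨f₀, h1⟩, h2⟩
  · rintro ⟨⟨f₀, h1⟩, h2⟩ N
    exact subset_closure (mem_WW_of hmeet h1 (fun n _ => h2 n))

lemma GG_closed : IsClosed (GG C) := by
  rw [← isOpen_compl_iff, isOpen_iff_forall_mem_open]
  rintro ⟨f, z⟩ hp
  simp only [GG, mem_compl_iff, mem_setOf_eq, not_forall] at hp
  obtain ⟨N, hN⟩ := hp
  refine ⟨{q : (ℕ → ℕ) × Z | ∀ n < N, q.1 n = f n} ∩ Prod.snd ⁻¹' (closure (WW C N f))ᶜ,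
    ?_, ?_, ?_⟩
  · rintro ⟨g, w⟩ ⟨hq1, hq2⟩ hGG
    exact hq2 (by simpa [WW_congr (fun n hn => (hq1 n hn : g n = f n))] using hGG N)
  · refine IsOpen.inter ?_ (isClosed_closure.isOpen_compl.preimage continuous_snd)
    have hset : {q : (ℕ → ℕ) × Z | ∀ n < N, q.1 n = f n}
        = ⋂ n ∈ Finset.range N, ((fun q : (ℕ → ℕ) × Z => q.1 n) ⁻¹' {f n}) := by
      ext q
      simp [Finset.mem_range]
    rw [hset]
    refine isOpen_biInter_finset (fun n _ => ?_)
    exact (isOpen_discrete ({f n} : Set ℕ)).preimage ((continuous_apply n).comp continuous_fst)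
  · exact ⟨fun n _ => rfl, hN⟩

end StrictDomAux

open StrictDomAux

/-- Main abstract lemma: a "strict" union of compacts indexed by `ℕ → ℕ` is Borel. -/
theorem strict_union_measurable {Z : Type*} [MetricSpace Z] [CompleteSpace Z]
    [SecondCountableTopology Z] (C : (ℕ → ℕ) → Set Z)
    (hcomp : ∀ f, IsCompact (C f))
    (hmono : ∀ f g, (∀ n, f n ≤ g n) → C f ⊆ C g)
    (hmeet : ∀ f g z, z ∈ C f → z ∈ C g → z ∈ C (fun n => min (f n) (g n))) :
    @MeasurableSet Z (borel Z) (⋃ f, C f) := by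
  letI : MeasurableSpace Z := borel Z
  haveI : BorelSpace Z := ⟨rfl⟩
  -- the capped graph sets
  let GGc : ℕ → ℕ → Set ((ℕ → ℕ) × Z) := fun i k =>
    (fun p : (ℕ → ℕ) × Z => (capf i k p.1, p.2)) ⁻¹' GG C
  have GGc_closed : ∀ i k, IsClosed (GGc i k) :=
    fun i k => GG_closed.preimage (((capf_cont i k).comp continuous_fst).prodMk continuous_snd)
  have hGGc_iff : ∀ i k (p : (ℕ → ℕ) × Z), p ∈ GGc i k ↔ (capf i k p.1, p.2) ∈ GG C :=
    fun i k p => Iff.rfl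
  have hGGiff : ∀ p : (ℕ → ℕ) × Z,
      p ∈ GG C ↔ (∃ f₀, p.2 ∈ C f₀) ∧ ∀ n, mm C p.2 n ≤ p.1 n :=
    fun p => mem_GG hcomp hmono hmeet
  -- R and Q
  let R : ℕ → ℕ → Set Z := fun i k => Prod.snd '' GGc i k
  let Q : ℕ → ℕ → Set Z := fun i k => Prod.snd '' (GG C \ GGc i k)
  have hRchar : ∀ i k z, z ∈ R i k ↔ (∃ f₀, z ∈ C f₀) ∧ mm C z i ≤ k := by
    intro i k z
    constructor
    · rintro ⟨p, hp, rfl⟩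
      obtain ⟨hB, hle⟩ := (hGGiff _).1 ((hGGc_iff i k p).1 hp)
      refine ⟨hB, ?_⟩
      have h5 : mm C p.2 i ≤ capf i k p.1 i := hle i
      rw [capf_self] at h5
      exact le_trans h5 (min_le_right _ _)
    · rintro ⟨hB, hle⟩
      refine ⟨⟨fun n => mm C z n, z⟩, (hGGc_iff i k _).2 ((hGGiff _).2 ⟨hB, fun n => ?_⟩), rfl⟩
      show mm C z n ≤ capf i k (fun n => mm C z n) n
      by_cases hn : n = i
      · subst hn
        rw [capf_self]
        exact le_min (le_refl _) hle
      · rw [capf_ne _ _ hn]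
  have hQchar : ∀ i k z, z ∈ Q i k ↔ (∃ f₀, z ∈ C f₀) ∧ k < mm C z i := by
    intro i k z
    constructor
    · rintro ⟨p, ⟨hp1, hp2⟩, rfl⟩
      obtain ⟨hB, hle⟩ := (hGGiff _).1 hp1
      refine ⟨hB, ?_⟩
      by_contra hcon
      push_neg at hcon
      refine hp2 ((hGGc_iff i k p).2 ((hGGiff _).2 ⟨hB, fun n => ?_⟩))
      show mm C p.2 n ≤ capf i k p.1 n
      by_cases hn : n = i
      · subst hn
        rw [capf_self]
        exact le_min (hle n) hcon
      · rw [capf_ne _ _ hn]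
        exact hle n
    · rintro ⟨hB, hlt⟩
      refine ⟨⟨fun n => mm C z n, z⟩, ⟨(hGGiff _).2 ⟨hB, fun n => le_refl _⟩, ?_⟩, rfl⟩
      intro hmem
      have h5 : mm C z i ≤ capf i k (fun n => mm C z n) i :=
        ((hGGiff _).1 ((hGGc_iff i k _).1 hmem)).2 i
      rw [capf_self] at h5
      have h6 : mm C z i ≤ k := le_trans h5 (min_le_right _ _)
      omega
  -- analyticity and separation
  have hRana : ∀ i k, AnalyticSet (R i k) :=
    fun i k => ((GGc_closed i k).measurableSet.analyticSet).image_of_continuous continuous_snd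
  have hQana : ∀ i k, AnalyticSet (Q i k) :=
    fun i k => ((GG_closed.measurableSet.diff
      (GGc_closed i k).measurableSet).analyticSet).image_of_continuous continuous_snd
  have hsep : ∀ i k, ∃ v : Set Z, R i k ⊆ v ∧ Disjoint (Q i k) v ∧ MeasurableSet v := by
    intro i k
    refine (hRana i k).measurablySeparable (hQana i k) ?_
    rw [disjoint_iff_inter_eq_empty]
    ext z
    simp only [mem_inter_iff, mem_empty_iff_false, iff_false, not_and]
    intro h1 h2
    obtain ⟨-, hle⟩ := (hRchar i k z).1 h1
    obtain ⟨-, hlt⟩ := (hQchar i k z).1 h2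
    omega
  choose u hu1 hu2 hu3 using hsep
  -- the disjoint scheme
  let E : ℕ → (ℕ → ℕ) → Set Z := fun N s =>
    ⋂ i ∈ Finset.range N,
      ((⋃ k ∈ Finset.range (s i + 1), u i k) \ ⋃ k ∈ Finset.range (s i), u i k)
  have hEmeas : ∀ N s, MeasurableSet (E N s) := by
    intro N s
    refine MeasurableSet.biInter (Finset.range N).countable_toSet (fun i _ => ?_)
    exact MeasurableSet.diff
      (MeasurableSet.biUnion (Finset.range _).countable_toSet (fun k _ => hu3 i k))
      (MeasurableSet.biUnion (Finset.range _).countable_toSet (fun k _ => hu3 i k))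
  have hEmm : ∀ z, (∃ f₀, z ∈ C f₀) → ∀ N, z ∈ E N (mm C z) := by
    intro z hB N
    refine mem_biInter (fun i _ => ⟨?_, ?_⟩)
    · exact mem_biUnion (Finset.mem_range.2 (Nat.lt_succ_self _))
        (hu1 i (mm C z i) ((hRchar i (mm C z i) z).2 ⟨hB, le_refl _⟩))
    · intro hmem
      obtain ⟨k, hk, hzk⟩ := by
        simpa only [mem_iUnion, exists_prop, Finset.mem_range] using hmem
      exact absurd hzk (disjoint_left.1 (hu2 i k) ((hQchar i k z).2 ⟨hB, hk⟩))
  have hEcong : ∀ N s t, (∀ i < N, s i = t i) → E N s = E N t := by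
    intro N s t h
    refine iInter₂_congr (fun i hi => ?_)
    rw [h i (Finset.mem_range.1 hi)]
  have hElevel : ∀ M N s, M ≤ N → E N s ⊆ E M s := by
    intro M N s hMN
    exact biInter_subset_biInter_left (fun i hi =>
      Finset.mem_range.2 (lt_of_lt_of_le (Finset.mem_range.1 hi) hMN))
  have hEuniq : ∀ N s t z, z ∈ E N s → z ∈ E N t → ∀ i < N, s i = t i := by
    have key : ∀ s t : ℕ → ℕ, ∀ N z, z ∈ E N s → z ∈ E N t →
        ∀ i, i < N → s i < t i → False := by
      intro s t N z hs ht i hiN hlt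
      have h1 := mem_iInter₂.1 hs i (Finset.mem_range.2 hiN)
      have h2 := mem_iInter₂.1 ht i (Finset.mem_range.2 hiN)
      obtain ⟨k, hk, hzk⟩ := by
        simpa only [mem_iUnion, exists_prop, Finset.mem_range] using h1.1
      exact h2.2 (mem_biUnion (Finset.mem_range.2 (by omega)) hzk)
    intro N s t z hs ht i hiN
    rcases lt_trichotomy (s i) (t i) with h | h | h
    · exact absurd (key s t N z hs ht i hiN h) id
    · exact h
    · exact absurd (key t s N z ht hs i hiN h) id
  -- padding of finite sequences
  let pad : (N : ℕ) → (Fin N → ℕ) → (ℕ → ℕ) := fun N s n => if h : n < N then s ⟨n, h⟩ else 0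
  let T : Set Z := ⋂ N, ⋃ s : Fin N → ℕ, (E N (pad N s) ∩ closure (WW C N (pad N s)))
  have hTmeas : MeasurableSet T := by
    refine MeasurableSet.iInter (fun N => MeasurableSet.iUnion (fun s => ?_))
    exact (hEmeas N (pad N s)).inter isClosed_closure.measurableSet
  have hBT : (⋃ f, C f) = T := by
    apply Subset.antisymm
    · rintro z hz
      obtain ⟨f₀, hf₀⟩ := mem_iUnion.1 hz
      refine mem_iInter.2 (fun N => mem_iUnion.2 ⟨fun i => mm C z i, ?_, ?_⟩)
      · have : E N (pad N fun i => mm C z i) = E N (mm C z) :=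
          hEcong N _ _ (fun i hi => by simp [pad, hi])
        rw [this]
        exact hEmm z ⟨f₀, hf₀⟩ N
      · have : WW C N (pad N fun i => mm C z i) = WW C N (mm C z) :=
          WW_congr (fun n hn => by simp [pad, hn])
        rw [this]
        exact subset_closure (mem_WW_of hmeet hf₀ (fun n _ => le_refl _))
    · intro z hz
      have hsN : ∀ N, ∃ s : Fin N → ℕ,
          z ∈ E N (pad N s) ∧ z ∈ closure (WW C N (pad N s)) := by
        intro N
        obtain ⟨s, hs⟩ := mem_iUnion.1 (mem_iInter.1 hz N)
        exact ⟨s, hs.1, hs.2⟩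
      choose sf hsE hsW using hsN
      set F : ℕ → ℕ := fun n => pad (n + 1) (sf (n + 1)) n with hF
      have coh : ∀ N, ∀ i, i < N → pad N (sf N) i = F i := by
        intro N i hiN
        have h1 : z ∈ E (i + 1) (pad N (sf N)) := hElevel (i + 1) N _ hiN (hsE N)
        have h2 : z ∈ E (i + 1) (pad (i + 1) (sf (i + 1))) := hsE (i + 1)
        exact hEuniq (i + 1) _ _ z h1 h2 i (Nat.lt_succ_self i)
      have hclW : ∀ N, z ∈ closure (WW C N F) := by
        intro N
        have : WW C N (pad N (sf N)) = WW C N F := WW_congr (fun n hn => coh N n hn)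
        rw [← this]
        exact hsW N
      obtain ⟨f₀, hf₀, -⟩ := diag hcomp hmono hclW
      exact mem_iUnion.2 ⟨f₀, hf₀⟩
  rw [hBT]
  exact hTmeas

/-- A strictly `ℕ^ℕ`-dominated separable metric space is Borel in its completion. -/
theorem strictly_dominated_borel (X : Type*) [MetricSpace X]
    [TopologicalSpace.SeparableSpace X]
    (A : Set (ℕ → ℕ) → Set X)
    (hcomp : ∀ K : Set (ℕ → ℕ), IsCompact K → IsCompact (A K))
    (hcover : (⋃ K ∈ {K : Set (ℕ → ℕ) | IsCompact K}, A K) = Set.univ)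
    (hinter : ∀ K L : Set (ℕ → ℕ), IsCompact K → IsCompact L → A (K ∩ L) = A K ∩ A L) :
    @MeasurableSet (UniformSpace.Completion X) (borel (UniformSpace.Completion X))
      (Set.range ((↑) : X → UniformSpace.Completion X)) := by
  haveI : TopologicalSpace.SeparableSpace (UniformSpace.Completion X) :=
    UniformSpace.Completion.denseRange_coe.separableSpace
      (UniformSpace.Completion.continuous_coe X)
  haveI : SecondCountableTopology (UniformSpace.Completion X) :=
    UniformSpace.secondCountable_of_separable (UniformSpace.Completion X)
  let box : (ℕ → ℕ) → Set (ℕ → ℕ) := fun f => {g | ∀ n, g n ≤ f n}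
  have hbox : ∀ f, IsCompact (box f) := by
    intro f
    have hpi : box f = Set.pi Set.univ (fun n => Set.Iic (f n)) := by
      ext g
      simp [box, Set.mem_pi, Pi.le_def]
    rw [hpi]
    exact isCompact_univ_pi (fun n => (Set.finite_Iic (f n)).isCompact)
  have hAmono : ∀ K L : Set (ℕ → ℕ), IsCompact K → IsCompact L → K ⊆ L → A K ⊆ A L := by
    intro K L hK hL hKL
    have h1 : K ∩ L = K := Set.inter_eq_left.2 hKL
    have h2 := hinter K L hK hL
    rw [h1] at h2
    rw [h2]
    exact Set.inter_subset_right
  let ι : X → UniformSpace.Completion X := (↑)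
  have hι_cont : Continuous ι := UniformSpace.Completion.continuous_coe X
  have hι_inj : Function.Injective ι := UniformSpace.Completion.coe_injective X
  let C : (ℕ → ℕ) → Set (UniformSpace.Completion X) := fun f => ι '' A (box f)
  have hcomp' : ∀ f, IsCompact (C f) := fun f => ((hcomp _ (hbox f)).image hι_cont)
  have hmono' : ∀ f g, (∀ n, f n ≤ g n) → C f ⊆ C g := by
    intro f g hfg
    exact Set.image_mono (hAmono _ _ (hbox f) (hbox g)
      (fun h hh n => le_trans (hh n) (hfg n)))
  have hmeet' : ∀ f g z, z ∈ C f → z ∈ C g → z ∈ C (fun n => min (f n) (g n)) := by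
    intro f g z hzf hzg
    obtain ⟨x, hx, rfl⟩ : ∃ x, x ∈ A (box f) ∧ ι x = z := hzf
    obtain ⟨y, hy, hyx⟩ : ∃ y, y ∈ A (box g) ∧ ι y = ι x := hzg
    rw [hι_inj hyx] at hy
    have hboxint : box f ∩ box g = box (fun n => min (f n) (g n)) := by
      ext h
      simp only [box, Set.mem_inter_iff, Set.mem_setOf_eq, le_min_iff, ← forall_and]
    have hmem : x ∈ A (box f ∩ box g) := by
      rw [hinter _ _ (hbox f) (hbox g)]
      exact ⟨hx, hy⟩
    rw [hboxint] at hmem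
    exact ⟨x, hmem, rfl⟩
  have hrange : Set.range ι = ⋃ f, C f := by
    apply Set.Subset.antisymm
    · intro z hzr
      obtain ⟨x, rfl⟩ := hzr
      have hx : x ∈ ⋃ K ∈ {K : Set (ℕ → ℕ) | IsCompact K}, A K := by
        rw [hcover]
        trivial
      obtain ⟨K, hK, hxK⟩ := Set.mem_iUnion₂.1 hx
      have hKfin : ∀ n : ℕ, ∃ b, ∀ g ∈ K, g n ≤ b := by
        intro n
        have hc : IsCompact ((fun g : ℕ → ℕ => g n) '' K) := hK.image (continuous_apply n)
        have hfin : ((fun g : ℕ → ℕ => g n) '' K).Finite := hc.finite ⟨inferInstance⟩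
        rcases hfin.bddAbove with ⟨b, hb⟩
        exact ⟨b, fun g hg => hb ⟨g, hg, rfl⟩⟩
      choose b hb using hKfin
      exact Set.mem_iUnion.2 ⟨b, ⟨x, hAmono _ _ hK (hbox b) (fun g hg n => hb n g hg) hxK, rfl⟩⟩
    · intro z hz
      obtain ⟨f, hf⟩ := Set.mem_iUnion.1 hz
      obtain ⟨x, -, rfl⟩ : ∃ x, x ∈ A (box f) ∧ ι x = z := hf
      exact ⟨x, rfl⟩
  show @MeasurableSet _ (borel (UniformSpace.Completion X)) (Set.range ι)
  rw [hrange]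
  exact strict_union_measurable C hcomp' hmono' hmeet'
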